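/- Let Q be a primitive string of length q, and let x and y be nonnegative integers with x ≢ y (mod q). Then for every integer L ≥ 0, δ_H(Q^∞[x..x+L), Q^∞[y..y+L)) ≥ ⌊L/q⌋. -/

import Mathlib

/-- Mismatch positions of two (equal-length) strings:
`Mis(X,Y) = {i : X[i] ≠ Y[i]}`. -/
def mis {α : Type*} [DecidableEq α] [Inhabited α] (X Y : List α) : Finset ℕ :=
  (Finset.range (min X.length Y.length)).filter (fun i => X.getD i default ≠ Y.getD i default)

/-- Hamming distance of two (equal-length) strings: the number of mismatch positions. -/
def hdist {α : Type*} [DecidableEq α] [Inhabited α] (X Y : List α) : ℕ := (mis X Y).card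

/-- The fragment `S[x..x+L)`. -/
def frag {α : Type*} (S : List α) (x L : ℕ) : List α := (S.drop x).take L

/-- `Q^∞[a..a+L)`: the string of length `L` whose `i`-th character is `Q[(a+i) mod |Q|]`. -/
def qinf {α : Type*} [Inhabited α] (Q : List α) (a L : ℕ) : List α :=
  (List.range L).map (fun i => Q.getD ((a + i) % Q.length) default)

/-- A nonempty string is primitive if it is not of the form `Y^h` with `h ≥ 2`. -/
def Primitive {α : Type*} (Q : List α) : Prop :=
  Q ≠ [] ∧ ∀ (Y : List α) (h : ℕ), 2 ≤ h → Q ≠ (List.replicate h Y).flatten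

/-- For a primitive string `Q` of length `q` and offsets `x ≢ y (mod q)`, the infinite powers
shifted by `x` and by `y` differ in at least `⌊L/q⌋` of their first `L` positions. -/
lemma per_mul {α : Type*} (f : ℕ → α) (d : ℕ) (hd : ∀ n, f (n + d) = f n) :
    ∀ k n, f (n + k * d) = f n := by
  intro k
  induction k with
  | zero => simp
  | succ k ih =>
    intro n
    rw [Nat.succ_mul, ← Nat.add_assoc, hd, ih]

lemma per_gcd {α : Type*} (f : ℕ → α) :
    ∀ d q : ℕ, (∀ n, f (n + d) = f n) → (∀ n, f (n + q) = f n) →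
      ∀ n, f (n + Nat.gcd d q) = f n := by
  intro d q
  induction d, q using Nat.gcd.induction with
  | H0 q => intro _ hq; simpa using hq
  | H1 d q hd0 ih =>
    intro hd hq
    rw [Nat.gcd_rec]
    apply ih
    · intro n
      have e : q % d + q / d * d = q := Nat.mod_add_div' q d
      calc f (n + q % d) = f (n + q % d + q / d * d) := (per_mul f d hd _ _).symm
        _ = f (n + q) := by rw [Nat.add_assoc, e]
        _ = f n := hq n
    · exact hd

lemma flatten_rep {α : Type*} (g : ℕ → α) (p : ℕ) (hp : ∀ n, g (n + p) = g n) :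
    ∀ h : ℕ, (List.replicate h ((List.range p).map g)).flatten = (List.range (h * p)).map g := by
  intro h
  induction h with
  | zero => simp
  | succ k ih =>
    rw [List.replicate_succ, List.flatten_cons, ih]
    rw [show (k + 1) * p = p + k * p by ring, List.range_add, List.map_append, List.map_map]
    congr 1
    apply List.map_congr_left
    intro a _
    simp only [Function.comp_apply]
    rw [Nat.add_comm, hp]

lemma key {α : Type*} [DecidableEq α] [Inhabited α] (Q : List α) (hQ : Primitive Q)
    (x y : ℕ) (hle : x ≤ y) (hxy : x % Q.length ≠ y % Q.length)
    (h : ∀ j, Q.getD ((x + j) % Q.length) default = Q.getD ((y + j) % Q.length) default) :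
    False := by
  set q := Q.length with hq
  have hq0 : 0 < q := List.length_pos_iff.mpr hQ.1
  set g : ℕ → α := fun n => Q.getD (n % q) default with hg
  have hper_q : ∀ n, g (n + q) = g n := by
    intro n; simp [hg, Nat.add_mod_right]
  set d := y - x with hd
  have hyd : y = x + d := by omega
  have hdq : ¬ q ∣ d := by
    intro ⟨t, ht⟩
    apply hxy
    rw [hyd, ht, Nat.add_mul_mod_self_left]
  have hge : ∀ m, x ≤ m → g (m + d) = g m := by
    intro m hm
    have hj := h (m - x)
    have e1 : x + (m - x) = m := by omega
    have e2 : y + (m - x) = m + d := by omega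
    rw [e1, e2] at hj
    exact hj.symm
  have hper_d : ∀ n, g (n + d) = g n := by
    intro n
    have hxq : x ≤ n + x * q := by
      have : x ≤ x * q := Nat.le_mul_of_pos_right x hq0
      omega
    calc g (n + d) = g (n + d + x * q) := (per_mul g q hper_q x (n + d)).symm
      _ = g (n + x * q + d) := by rw [Nat.add_right_comm]
      _ = g (n + x * q) := hge _ hxq
      _ = g n := per_mul g q hper_q x n
  set p := Nat.gcd d q with hp
  have hper_p : ∀ n, g (n + p) = g n := per_gcd g d q hper_d hper_q
  have hpq : p ∣ q := Nat.gcd_dvd_right d q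
  have hp0 : 0 < p := Nat.gcd_pos_of_pos_right d hq0
  have hpne : p ≠ q := by
    intro hc
    exact hdq (hc ▸ Nat.gcd_dvd_left d q)
  have hplt : p < q := lt_of_le_of_ne (Nat.le_of_dvd hq0 hpq) hpne
  set h2 := q / p with hh2
  have hqp : p * h2 = q := Nat.mul_div_cancel' hpq
  have hh2ge : 2 ≤ h2 := by
    rcases Nat.lt_or_ge h2 2 with hlt | hge
    · interval_cases h2 <;> omega
    · exact hge
  have hQeq : Q = (List.range q).map g := by
    apply List.ext_getElem
    · simp [hq]
    · intro i h1' h2'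
      simp only [List.getElem_map, List.getElem_range, hg]
      rw [Nat.mod_eq_of_lt h1', List.getD_eq_getElem _ _ h1']
  apply hQ.2 ((List.range p).map g) h2 hh2ge
  rw [flatten_rep g p hper_p h2, hQeq, show h2 * p = q by rw [Nat.mul_comm]; exact hqp]

lemma exists_mismatch {α : Type*} [DecidableEq α] [Inhabited α] (Q : List α) (hQ : Primitive Q)
    (x y : ℕ) (hxy : x % Q.length ≠ y % Q.length) :
    ∃ j < Q.length, Q.getD ((x + j) % Q.length) default ≠ Q.getD ((y + j) % Q.length) default := by
  have hq0 : 0 < Q.length := List.length_pos_iff.mpr hQ.1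
  by_contra hc
  push_neg at hc
  have hall : ∀ j, Q.getD ((x + j) % Q.length) default = Q.getD ((y + j) % Q.length) default := by
    intro j
    have := hc (j % Q.length) (Nat.mod_lt _ hq0)
    rwa [Nat.add_mod_mod, Nat.add_mod_mod] at this
  rcases le_total x y with hle | hle
  · exact key Q hQ x y hle hxy hall
  · exact key Q hQ y x hle hxy.symm (fun j => (hall j).symm)

theorem stmt3 {α : Type*} [DecidableEq α] [Inhabited α]
    (Q : List α) (q : ℕ) (hq : Q.length = q) (hQprim : Primitive Q)
    (x y : ℕ) (hxy : x % q ≠ y % q) (L : ℕ) :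
    L / q ≤ hdist (qinf Q x L) (qinf Q y L) := by
  subst hq
  have hq0 : 0 < Q.length := List.length_pos_iff.mpr hQprim.1
  set q := Q.length with hq
  obtain ⟨j0, hj0q, hj0⟩ := exists_mismatch Q hQprim x y hxy
  have hget : ∀ a i, i < L → (qinf Q a L).getD i default = Q.getD ((a + i) % q) default := by
    intro a i hi
    rw [qinf, List.getD_eq_getElem _ _ (by simpa using hi)]
    simp [hq]
  have hmem : ∀ k, k < L / q → k * q + j0 ∈ mis (qinf Q x L) (qinf Q y L) := by
    intro k hk
    have h1 : k * q + j0 < (k + 1) * q := by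
      rw [Nat.succ_mul]; exact Nat.add_lt_add_left hj0q _
    have h2' : (k + 1) * q ≤ L / q * q := Nat.mul_le_mul_right _ (by omega)
    have h3 : L / q * q ≤ L := Nat.div_mul_le_self L q
    have hlt : k * q + j0 < L := by linarith
    rw [mis, Finset.mem_filter, Finset.mem_range]
    refine ⟨by simpa [qinf] using hlt, ?_⟩
    rw [hget x _ hlt, hget y _ hlt]
    have e : ∀ a, (a + (k * q + j0)) % q = (a + j0) % q := by
      intro a
      rw [show a + (k * q + j0) = a + j0 + k * q by ring, Nat.add_mul_mod_self_right]
    rw [e, e]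
    exact hj0
  calc L / q = (Finset.range (L / q)).card := (Finset.card_range _).symm
    _ ≤ (mis (qinf Q x L) (qinf Q y L)).card := by
        apply Finset.card_le_card_of_injOn (fun k => k * q + j0)
        · intro k hk
          exact hmem k (Finset.mem_range.mp hk)
        · intro a _ b _ hab
          have := Nat.add_right_cancel hab
          exact Nat.eq_of_mul_eq_mul_right hq0 this
    _ = hdist (qinf Q x L) (qinf Q y L) := rfl
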